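/- Let η be a Borel probability measure on ℝ with finite mean m(η) and with E_{X∼η}[f(|X|)] < ∞, and let x ∈ ℝ satisfy f(|x|) < B. Then KL_inf(η,x) < ∞. -/

import Mathlib

open MeasureTheory Filter Set
open scoped ENNReal NNReal Classical

/-- Kullback–Leibler divergence between two measures on ℝ, valued in `ℝ≥0∞`
(`∞` if `η` is not absolutely continuous w.r.t. `κ` or the log-likelihood ratio
is not integrable under `η`). -/
noncomputable def KL (η κ : Measure ℝ) : ℝ≥0∞ :=
  if η ≪ κ ∧ Integrable (llr η κ) η then ENNReal.ofReal (∫ y, llr η κ y ∂η) else ⊤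

/-- The mean of a measure on ℝ. -/
noncomputable def meanM (η : Measure ℝ) : ℝ := ∫ y, y ∂η

/-- Membership in the class `ℒ`: Borel probability measures on ℝ with `E[f(|X|)] ≤ B`. -/
def inL (f : ℝ → ℝ) (B : ℝ) (κ : Measure ℝ) : Prop :=
  IsProbabilityMeasure κ ∧ (∫⁻ y, ENNReal.ofReal (f |y|) ∂κ) ≤ ENNReal.ofReal B

/-- `KL_inf(η, x)`: the infimum of `KL(η, κ)` over `κ ∈ ℒ` with `m(κ) ≥ x` when
`x ≥ m(η)`, and over `κ ∈ ℒ` with `m(κ) ≤ x` when `x < m(η)`. -/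
noncomputable def KLinf (f : ℝ → ℝ) (B : ℝ) (η : Measure ℝ) (x : ℝ) : ℝ≥0∞ :=
  if meanM η ≤ x then
    ⨅ κ ∈ {κ : Measure ℝ | inL f B κ ∧ x ≤ meanM κ}, KL η κ
  else
    ⨅ κ ∈ {κ : Measure ℝ | inL f B κ ∧ meanM κ ≤ x}, KL η κ

/-- The mixture measure `a·η + (1-a)·δ_z` used as a witness. -/
noncomputable def mixM (η : Measure ℝ) (z a : ℝ) : Measure ℝ :=
  ENNReal.ofReal a • η + ENNReal.ofReal (1 - a) • Measure.dirac z

lemma mix_prob (η : Measure ℝ) [IsProbabilityMeasure η] (z a : ℝ)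
    (ha : 0 ≤ a) (ha1 : a ≤ 1) : IsProbabilityMeasure (mixM η z a) := by
  constructor
  simp only [mixM, Measure.add_apply, Measure.smul_apply, smul_eq_mul, measure_univ, mul_one]
  rw [← ENNReal.ofReal_add ha (by linarith)]
  norm_num

lemma mix_lintegral (η : Measure ℝ) (z a : ℝ) (g : ℝ → ℝ≥0∞) :
    ∫⁻ y, g y ∂(mixM η z a)
      = ENNReal.ofReal a * ∫⁻ y, g y ∂η + ENNReal.ofReal (1 - a) * g z := by
  simp [mixM, lintegral_add_measure, lintegral_smul_measure, lintegral_dirac]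

lemma mix_mean (η : Measure ℝ) (z a : ℝ) (ha : 0 ≤ a) (ha1 : a ≤ 1)
    (hmean : Integrable (fun y : ℝ => y) η) :
    meanM (mixM η z a) = a * meanM η + (1 - a) * z := by
  have h1 : Integrable (fun y : ℝ => y) (ENNReal.ofReal a • η) :=
    hmean.smul_measure ENNReal.ofReal_ne_top
  have hdirac : Integrable (fun y : ℝ => y) (Measure.dirac z) := by
    refine ⟨measurable_id.aestronglyMeasurable, ?_⟩
    rw [HasFiniteIntegral, lintegral_dirac]
    exact ENNReal.coe_lt_top
  have h2 : Integrable (fun y : ℝ => y) (ENNReal.ofReal (1 - a) • Measure.dirac z) :=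
    hdirac.smul_measure ENNReal.ofReal_ne_top
  rw [meanM, mixM, integral_add_measure h1 h2, integral_smul_measure, integral_smul_measure,
    integral_dirac, ENNReal.toReal_ofReal ha, ENNReal.toReal_ofReal (by linarith)]
  rfl

lemma kl_mix_lt_top (η : Measure ℝ) [IsProbabilityMeasure η] (z : ℝ) (hz : η {z} = 0)
    {a : ℝ} (ha : 0 < a) (ha1 : a < 1) : KL η (mixM η z a) < ⊤ := by
  set κ := mixM η z a with hκdef
  have hprob : IsProbabilityMeasure κ := mix_prob η z a ha.le ha1.le
  set g : ℝ → ℝ≥0∞ := ({z}ᶜ : Set ℝ).indicator (fun _ => ENNReal.ofReal a⁻¹) with hg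
  have hgm : Measurable g :=
    measurable_const.indicator (measurableSet_singleton z).compl
  have hgz : g z = 0 := by simp [hg]
  have hne : ∀ᵐ y ∂η, y ≠ z := by
    have hset : {y : ℝ | ¬ y ≠ z} = {z} := by ext y; simp
    rw [ae_iff, hset]; exact hz
  have hgη : g =ᵐ[η] fun _ => ENNReal.ofReal a⁻¹ := by
    filter_upwards [hne] with y hy
    simp [hg, hy]
  have hηκ : κ.withDensity g = η := by
    ext S hS
    rw [withDensity_apply _ hS, hκdef, mixM, Measure.restrict_add, Measure.restrict_smul,
      Measure.restrict_smul, lintegral_add_measure, lintegral_smul_measure,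
      lintegral_smul_measure, setLIntegral_dirac g S,
      lintegral_congr_ae (ae_restrict_of_ae hgη), setLIntegral_const]
    have h0 : (if z ∈ S then g z else 0) = 0 := by rw [hgz]; exact ite_self 0
    rw [h0, smul_zero, add_zero, smul_eq_mul, ← mul_assoc, ← ENNReal.ofReal_mul ha.le,
      mul_inv_cancel₀ ha.ne', ENNReal.ofReal_one, one_mul]
  have hac : η ≪ κ := by
    rw [← hηκ]; exact withDensity_absolutelyContinuous κ g
  have hrnκ : η.rnDeriv κ =ᵐ[κ] g := by
    have h := Measure.rnDeriv_withDensity κ hgm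
    rwa [hηκ] at h
  have hrnη : η.rnDeriv κ =ᵐ[η] g := hac.ae_eq hrnκ
  have hllr : llr η κ =ᵐ[η] fun _ => Real.log a⁻¹ := by
    filter_upwards [hrnη, hne] with y h1 h2
    rw [llr_def]
    simp only [h1, hg, Set.indicator_of_mem (Set.mem_compl_singleton_iff.mpr h2),
      ENNReal.toReal_ofReal (inv_nonneg.mpr ha.le)]
  have hint : Integrable (llr η κ) η := (integrable_const (Real.log a⁻¹)).congr hllr.symm
  rw [KL, if_pos ⟨hac, hint⟩]
  exact ENNReal.ofReal_lt_top

lemma arith_max (a u v : ℝ) (ha : 0 ≤ a) (hv : 0 < v) (h : a ≤ v / max u v) : a * u ≤ v := by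
  have hm : 0 < max u v := lt_max_of_lt_right hv
  have h2 : a * max u v ≤ v := by
    rw [le_div_iff₀ hm] at h
    linarith
  calc a * u ≤ a * max u v := mul_le_mul_of_nonneg_left (le_max_left _ _) ha
    _ ≤ v := h2

/-- If `η` is a Borel probability measure on ℝ with finite mean and
`E_η[f(|X|)] < ∞`, and `x` satisfies `f(|x|) < B`, then `KL_inf(η, x) < ∞`. -/
theorem stmt_4 (f : ℝ → ℝ) (B : ℝ)
    (hf_mono : StrictMonoOn f (Set.Ici 0))
    (hf_cont : ContinuousOn f (Set.Ici 0))
    (hf_nonneg : ∀ y : ℝ, 0 ≤ y → 0 ≤ f y)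
    (hf_conv : StrictConvexOn ℝ (Set.Ici 0) f)
    (hf_growth : Tendsto (fun y : ℝ => f y / y) atTop atTop)
    (hB : 0 < B) (hf0B : f 0 < B)
    (η : Measure ℝ) (hη : IsProbabilityMeasure η)
    (hmean : Integrable (fun y : ℝ => y) η)
    (hfint : (∫⁻ y, ENNReal.ofReal (f |y|) ∂η) < ⊤)
    (x : ℝ) (hx : f |x| < B) :
    KLinf f B η x < ⊤ := by
  classical
  -- Find t > |x| with f t < B and η {t} = 0 = η {-t}.
  have hxabs : (0:ℝ) ≤ |x| := abs_nonneg x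
  have hcx : ContinuousWithinAt f (Set.Ici 0) |x| := hf_cont _ hxabs
  have hev : ∀ᶠ y in nhdsWithin |x| (Set.Ici 0), f y < B := by
    have := hcx.eventually_mem (Iio_mem_nhds hx)
    filter_upwards [this] with y hy using hy
  obtain ⟨δ, hδpos, hball⟩ := Metric.mem_nhdsWithin_iff.mp hev
  have hIooB : ∀ t ∈ Set.Ioo |x| (|x| + δ), f t < B := by
    intro t ht
    apply hball
    constructor
    · rw [Metric.mem_ball, Real.dist_eq, abs_of_nonneg (by linarith [ht.1])]
      linarith [ht.2]
    · exact le_trans hxabs ht.1.le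
  -- atoms of η are countable
  have hct : {s : ℝ | 0 < η {s}}.Countable := by
    have h := Measure.countable_meas_level_set_pos (μ := η) (g := (id : ℝ → ℝ)) measurable_id
    simpa [Set.setOf_eq_eq_singleton] using h
  have hbad : ({s : ℝ | 0 < η {s}} ∪ (fun s : ℝ => -s) ⁻¹' {s : ℝ | 0 < η {s}}).Countable :=
    hct.union (hct.preimage neg_injective)
  have hunc : ¬ (Set.Ioo |x| (|x| + δ)).Countable := by
    intro hcnt
    have hmk : Cardinal.mk (Set.Ioo |x| (|x| + δ)) = Cardinal.continuum :=
      Cardinal.mk_Ioo_real (by linarith)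
    have h2 : Cardinal.mk (Set.Ioo |x| (|x| + δ)) ≤ Cardinal.aleph0 :=
      Cardinal.mk_le_aleph0_iff.mpr (Set.countable_coe_iff.mpr hcnt)
    rw [hmk] at h2
    exact Cardinal.aleph0_lt_continuum.not_ge h2
  have hne : (Set.Ioo |x| (|x| + δ) \
      ({s : ℝ | 0 < η {s}} ∪ (fun s : ℝ => -s) ⁻¹' {s : ℝ | 0 < η {s}})).Nonempty := by
    by_contra hemp
    rw [Set.not_nonempty_iff_eq_empty, Set.diff_eq_empty] at hemp
    exact hunc (hbad.mono hemp)
  obtain ⟨t, htIoo, htbad⟩ := hne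
  rw [Set.mem_union, not_or] at htbad
  have hxt : |x| < t := htIoo.1
  have ht0 : 0 < t := lt_of_le_of_lt hxabs hxt
  have htB : f t < B := hIooB t htIoo
  have hηt : η {t} = 0 := by
    have := htbad.1
    simpa [not_lt, le_zero_iff] using this
  have hηnt : η {-t} = 0 := by
    have := htbad.2
    simpa [not_lt, le_zero_iff] using this
  have hft0 : 0 ≤ f t := hf_nonneg t ht0.le
  set L := ∫⁻ y, ENNReal.ofReal (f |y|) ∂η with hL
  set C := L.toReal with hC
  have hC0 : 0 ≤ C := ENNReal.toReal_nonneg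
  have hLC : L = ENNReal.ofReal C := (ENNReal.ofReal_toReal hfint.ne).symm
  set m := meanM η with hm
  -- generic construction, parametrized by side
  have key : ∀ (z : ℝ) (a : ℝ), 0 < a → a < 1 → |z| = t → η {z} = 0 →
      a * C + (1 - a) * f t ≤ B →
      inL f B (mixM η z a) ∧ meanM (mixM η z a) = a * m + (1 - a) * z ∧
        KL η (mixM η z a) < ⊤ := by
    intro z a ha0 ha1 hzabs hzatom hmom
    refine ⟨⟨mix_prob η z a ha0.le ha1.le, ?_⟩, mix_mean η z a ha0.le ha1.le hmean, 
      kl_mix_lt_top η z hzatom ha0 ha1⟩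
    rw [mix_lintegral η z a (fun y => ENNReal.ofReal (f |y|)), ← hL, hLC, hzabs,
      ← ENNReal.ofReal_mul ha0.le, ← ENNReal.ofReal_mul (by linarith),
      ← ENNReal.ofReal_add (mul_nonneg ha0.le hC0) (mul_nonneg (by linarith) hft0)]
    exact ENNReal.ofReal_le_ofReal hmom
  by_cases hmx : meanM η ≤ x
  · -- case m ≤ x : use z = t, weight a small
    set a : ℝ := min (1/2) (min ((t - x) / max (t - m) (t - x))
      ((B - f t) / max (C - f t) (B - f t))) with haDef
    have hxlt : x < t := lt_of_le_of_lt (le_abs_self x) hxt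
    have ha0 : 0 < a := by
      apply lt_min (by norm_num)
      apply lt_min
      · exact div_pos (by linarith) (lt_max_of_lt_right (by linarith))
      · exact div_pos (by linarith) (lt_max_of_lt_right (by linarith))
    have ha1 : a < 1 := lt_of_le_of_lt (min_le_left _ _) (by norm_num)
    have hmom : a * C + (1 - a) * f t ≤ B := by
      have := arith_max a (C - f t) (B - f t) ha0.le (by linarith)
        (le_trans (min_le_right _ _) (min_le_right _ _))
      linarith
    have hmean2 : a * (t - m) ≤ t - x :=
      arith_max a (t - m) (t - x) ha0.le (by linarith)
        (le_trans (min_le_right _ _) (min_le_left _ _))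
    obtain ⟨hinL, hmeanEq, hKL⟩ := key t a ha0 ha1 (abs_of_pos ht0) hηt hmom
    have hxmean : x ≤ meanM (mixM η t a) := by rw [hmeanEq]; linarith
    rw [KLinf, if_pos hmx]
    exact lt_of_le_of_lt (iInf₂_le (mixM η t a) ⟨hinL, hxmean⟩) hKL
  · -- case x < m : use z = -t
    push_neg at hmx
    have hxgt : -t < x := by
      have := neg_abs_le x; linarith
    set a : ℝ := min (1/2) (min ((x + t) / max (m + t) (x + t))
      ((B - f t) / max (C - f t) (B - f t))) with haDef
    have ha0 : 0 < a := by
      apply lt_min (by norm_num)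
      apply lt_min
      · exact div_pos (by linarith) (lt_max_of_lt_right (by linarith))
      · exact div_pos (by linarith) (lt_max_of_lt_right (by linarith))
    have ha1 : a < 1 := lt_of_le_of_lt (min_le_left _ _) (by norm_num)
    have hmom : a * C + (1 - a) * f t ≤ B := by
      have := arith_max a (C - f t) (B - f t) ha0.le (by linarith)
        (le_trans (min_le_right _ _) (min_le_right _ _))
      linarith
    have hmean2 : a * (m + t) ≤ x + t :=
      arith_max a (m + t) (x + t) ha0.le (by linarith)
        (le_trans (min_le_right _ _) (min_le_left _ _))
    obtain ⟨hinL, hmeanEq, hKL⟩ := key (-t) a ha0 ha1 (by rw [abs_neg, abs_of_pos ht0]) hηnt hmom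
    have hxmean : meanM (mixM η (-t) a) ≤ x := by rw [hmeanEq]; linarith
    rw [KLinf, if_neg (not_le.mpr hmx)]
    exact lt_of_le_of_lt (iInf₂_le (mixM η (-t) a) ⟨hinL, hxmean⟩) hKL
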